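/- Let μ, μ̂ : ℝᵖ → ℝ be linear: μ(x) = x·w, μ̂(x) = x·ŵ, with w^j = 0. Let (x_i, ε_i) be i.i.d., x_i mean-zero with finite fourth moments, ε_i mean-zero independent of x_i, and let x̃_i^{(j)} replace x_i^j by x̂_i^j + ε̃_i^j where x̂_i^j = E[x^j | x_i^{−j}] and the residuals (x_i^j − x̂_i^j) are randomly permuted. Assume E[x^j | x^{−j}] = x^{−j}·u is linear. Then the CPI estimator m̂^j_{CPI} = (1/n) Σ_i [(y_i − μ̂(x̃_i^{(j)}))² − (y_i − μ̂(x_i))²], with y_i = μ(x_i) + ε_i, converges in probability to 0 as n → ∞. -/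

import Mathlib

set_option linter.unusedSectionVars false
set_option maxHeartbeats 2000000

open MeasureTheory ProbabilityTheory Filter Finset Topology
open scoped ENNReal

section Aux

variable {Ω : Type*} [MeasurableSpace Ω] {μ : Measure Ω} [IsProbabilityMeasure μ]

lemma cpi_integrable_mul_L2 {f g : Ω → ℝ} (hf : MemLp f 2 μ) (hg : MemLp g 2 μ) :
    Integrable (fun ω => f ω * g ω) μ := by
  have h : MemLp (f • g) 1 μ := hg.smul hf
  exact memLp_one_iff_integrable.1 h

lemma cpi_memLp_mul_L4 {f g : Ω → ℝ} (hf : MemLp f 4 μ) (hg : MemLp g 4 μ) :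
    MemLp (fun ω => f ω * g ω) 2 μ := by
  have h4 : (2:ℝ≥0∞)⁻¹ = 4⁻¹ + 4⁻¹ := by
    rw [← two_mul, show (4:ℝ≥0∞) = 2*2 by norm_num, ENNReal.mul_inv (by norm_num) (by norm_num),
      ← mul_assoc, ENNReal.mul_inv_cancel (by norm_num) (by norm_num), one_mul]
  have h : MemLp (f • g) 2 μ := hg.smul hf (hpqr := ⟨h4.symm⟩)
  exact h

lemma cpi_meas_abs_ge_le {f : Ω → ℝ} (hf : MemLp f 2 μ) {δ K : ℝ} (hδ : 0 < δ)
    (hK : ∫ ω, (f ω)^2 ∂μ ≤ K) :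
    μ {ω | δ ≤ |f ω|} ≤ ENNReal.ofReal (K / δ^2) := by
  have hK0 : 0 ≤ K := le_trans (integral_nonneg fun ω => sq_nonneg _) hK
  have hint : Integrable (fun ω => (f ω)^2) μ :=
    (memLp_two_iff_integrable_sq hf.aestronglyMeasurable).1 hf
  have hset : {ω | δ ≤ |f ω|} = {ω | δ^2 ≤ (f ω)^2} := by
    ext ω
    simp only [Set.mem_setOf_eq]
    rw [← sq_abs (f ω)]
    exact (pow_le_pow_iff_left₀ hδ.le (abs_nonneg _) two_ne_zero).symm
  have hmarkov := mul_meas_ge_le_integral_of_nonneg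
    (Filter.Eventually.of_forall fun ω => sq_nonneg (f ω)) hint (δ^2)
  have h1 : (μ {ω | δ^2 ≤ (f ω)^2}).toReal ≤ K / δ^2 := by
    rw [le_div_iff₀ (by positivity)]
    rw [measureReal_def] at hmarkov
    nlinarith [hmarkov, hK]
  rw [hset]
  exact (ENNReal.le_ofReal_iff_toReal_le (measure_ne_top μ _) (by positivity)).2 h1

lemma cpi_sum_sq_le {n : ℕ} {Z : Fin n → Ω → ℝ} (hZ : ∀ i, MemLp (Z i) 2 μ)
    (horth : ∀ i i', i ≠ i' → ∫ ω, Z i ω * Z i' ω ∂μ = 0)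
    {C : ℝ} (hC : ∀ i, ∫ ω, Z i ω * Z i ω ∂μ ≤ C) :
    ∫ ω, (∑ i, Z i ω)^2 ∂μ ≤ n * C := by
  have hint : ∀ i i' : Fin n, Integrable (fun ω => Z i ω * Z i' ω) μ :=
    fun i i' => cpi_integrable_mul_L2 (hZ i) (hZ i')
  have hexp : ∀ ω, (∑ i, Z i ω)^2 = ∑ i, ∑ i', Z i ω * Z i' ω := by
    intro ω; rw [sq, Finset.sum_mul_sum]
  calc ∫ ω, (∑ i, Z i ω)^2 ∂μ
      = ∑ i, ∑ i', ∫ ω, Z i ω * Z i' ω ∂μ := by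
        simp_rw [hexp]
        rw [integral_finset_sum _ (fun i _ => integrable_finset_sum _ (fun i' _ => hint i i'))]
        exact Finset.sum_congr rfl fun i _ => integral_finset_sum _ (fun i' _ => hint i i')
    _ = ∑ i : Fin n, ∫ ω, Z i ω * Z i ω ∂μ := by
        refine Finset.sum_congr rfl fun i _ => ?_
        rw [Finset.sum_eq_single i (fun i' _ h => horth i i' (Ne.symm h)) (by simp)]
    _ ≤ ∑ _i : Fin n, C := Finset.sum_le_sum fun i _ => hC i
    _ = n * C := by simp [Finset.sum_const, Finset.card_univ, nsmul_eq_mul]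

end Aux

section Core

variable {Ω : Type*} [MeasurableSpace Ω] {μ : Measure Ω} [IsProbabilityMeasure μ]
variable {β : Type*} [MeasurableSpace β]

lemma cpi_core {W : ℕ → Ω → β}
    (hW : ∀ i, Measurable (W i))
    (hindep : iIndepFun W μ)
    (hident : ∀ i, IdentDistrib (W i) (W 0) μ μ)
    {G R : β → ℝ} (hG : Measurable G) (hR : Measurable R)
    (hG0 : ∫ ω, G (W 0 ω) ∂μ = 0)
    (hGR0 : ∫ ω, G (W 0 ω) * R (W 0 ω) ∂μ = 0)
    (hGR2 : MemLp (fun ω => G (W 0 ω) * R (W 0 ω)) 2 μ)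
    (hG2 : MemLp (fun ω => G (W 0 ω)) 2 μ)
    (hR2 : MemLp (fun ω => R (W 0 ω)) 2 μ)
    (n : ℕ) (s : Fin n → Fin n) :
    MemLp (fun ω => ∑ i : Fin n, G (W (i:ℕ) ω) * R (W (s i : ℕ) ω)) 2 μ ∧
    ∫ ω, (∑ i : Fin n, G (W (i:ℕ) ω) * R (W (s i : ℕ) ω))^2 ∂μ ≤
      n * ((∫ ω, (G (W 0 ω) * R (W 0 ω))^2 ∂μ) +
        (∫ ω, (G (W 0 ω))^2 ∂μ) * (∫ ω, (R (W 0 ω))^2 ∂μ)) := by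
  -- identical distribution transfer
  have tId : ∀ (i : ℕ) (F : β → ℝ), Measurable F →
      IdentDistrib (fun ω => F (W i ω)) (fun ω => F (W 0 ω)) μ μ :=
    fun i F hF => (hident i).comp hF
  have intEq : ∀ (i : ℕ) (F : β → ℝ) (hF : Measurable F),
      ∫ ω, F (W i ω) ∂μ = ∫ ω, F (W 0 ω) ∂μ :=
    fun i F hF => (tId i F hF).integral_eq
  -- two-sample factorization
  have two : ∀ (a c : ℕ) (F K : β → ℝ), a ≠ c → Measurable F → Measurable K →
      ∫ ω, F (W a ω) * K (W c ω) ∂μ =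
        (∫ ω, F (W a ω) ∂μ) * ∫ ω, K (W c ω) ∂μ := by
    intro a c F K hac hF hK
    exact ((hindep.indepFun hac).comp hF hK).integral_fun_mul_eq_mul_integral
      ((hF.comp (hW a)).aestronglyMeasurable) ((hK.comp (hW c)).aestronglyMeasurable)
  -- lone-factor factorization
  have lone : ∀ (t : ℕ) (T : Finset ℕ), t ∉ T → ∀ (F : β → ℝ), Measurable F →
      ∀ (g : (T → β) → ℝ), Measurable g →
      ∫ ω, F (W t ω) * g (fun i : T => W (i:ℕ) ω) ∂μ =
        (∫ ω, F (W t ω) ∂μ) * ∫ ω, g (fun i : T => W (i:ℕ) ω) ∂μ := by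
    intro t T ht F hF g hg
    have hd : Disjoint ({t} : Finset ℕ) T := Finset.disjoint_singleton_left.mpr ht
    have hi := hindep.indepFun_finset {t} T hd (fun i => hW i)
    have hcomp := hi.comp
      (φ := fun v : ({t} : Finset ℕ) → β => F (v ⟨t, Finset.mem_singleton_self t⟩))
      (ψ := g) (hF.comp (measurable_pi_apply _)) hg
    exact hcomp.integral_fun_mul_eq_mul_integral ((hF.comp (hW t)).aestronglyMeasurable)
      ((hg.comp (measurable_pi_lambda _ (fun i => hW (i:ℕ)))).aestronglyMeasurable)
  -- integral of G over any sample is zero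
  have hGz : ∀ a : ℕ, ∫ ω, G (W a ω) ∂μ = 0 := fun a => by rw [intEq a G hG, hG0]
  have hGRz : ∀ a : ℕ, ∫ ω, G (W a ω) * R (W a ω) ∂μ = 0 := fun a => by
    rw [show (fun ω => G (W a ω) * R (W a ω)) = fun ω => (fun b => G b * R b) (W a ω) from rfl,
      intEq a (fun b => G b * R b) (hG.mul hR)]
    exact hGR0
  -- key orthogonality
  have key : ∀ a b c d : ℕ, a ≠ c →
      ∫ ω, (G (W a ω) * R (W b ω)) * (G (W c ω) * R (W d ω)) ∂μ = 0 := by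
    intro a b c d hac
    by_cases hab : a = b
    · subst hab
      by_cases hcd : c = d
      · subst hcd
        rw [two a c (fun b => G b * R b) (fun b => G b * R b) hac (hG.mul hR) (hG.mul hR),
          hGRz a, zero_mul]
      · -- c lone
        have hrw : ∀ ω, (G (W a ω) * R (W a ω)) * (G (W c ω) * R (W d ω)) =
            G (W c ω) * ((G (W a ω) * R (W a ω)) * R (W d ω)) := fun ω => by ring
        simp_rw [hrw]
        have hmem_a : a ∈ ({a, d} : Finset ℕ) := by simp
        have hmem_d : d ∈ ({a, d} : Finset ℕ) := by simp
        have hc : c ∉ ({a, d} : Finset ℕ) := by simp [Ne.symm hac, hcd]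
        rw [lone c {a, d} hc G hG
          (fun v => (G (v ⟨a, hmem_a⟩) * R (v ⟨a, hmem_a⟩)) * R (v ⟨d, hmem_d⟩))
          (((hG.comp (measurable_pi_apply _)).mul (hR.comp (measurable_pi_apply _))).mul
            (hR.comp (measurable_pi_apply _))), hGz c, zero_mul]
    · by_cases had : a = d
      · subst had
        by_cases hcb : c = b
        · subst hcb
          have hrw : ∀ ω, (G (W a ω) * R (W c ω)) * (G (W c ω) * R (W a ω)) =
              (G (W a ω) * R (W a ω)) * (G (W c ω) * R (W c ω)) := fun ω => by ring
          simp_rw [hrw]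
          rw [two a c (fun b => G b * R b) (fun b => G b * R b) hac (hG.mul hR) (hG.mul hR),
            hGRz a, zero_mul]
        · -- c lone, a = d
          have hrw : ∀ ω, (G (W a ω) * R (W b ω)) * (G (W c ω) * R (W a ω)) =
              G (W c ω) * ((G (W a ω) * R (W a ω)) * R (W b ω)) := fun ω => by ring
          simp_rw [hrw]
          have hmem_a : a ∈ ({a, b} : Finset ℕ) := by simp
          have hmem_b : b ∈ ({a, b} : Finset ℕ) := by simp
          have hc : c ∉ ({a, b} : Finset ℕ) := by simp [Ne.symm hac, hcb]
          rw [lone c {a, b} hc G hG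
            (fun v => (G (v ⟨a, hmem_a⟩) * R (v ⟨a, hmem_a⟩)) * R (v ⟨b, hmem_b⟩))
            (((hG.comp (measurable_pi_apply _)).mul (hR.comp (measurable_pi_apply _))).mul
              (hR.comp (measurable_pi_apply _))), hGz c, zero_mul]
      · -- a lone
        have hrw : ∀ ω, (G (W a ω) * R (W b ω)) * (G (W c ω) * R (W d ω)) =
            G (W a ω) * (R (W b ω) * (G (W c ω) * R (W d ω))) := fun ω => by ring
        simp_rw [hrw]
        have hmem_b : b ∈ ({b, c, d} : Finset ℕ) := by simp
        have hmem_c : c ∈ ({b, c, d} : Finset ℕ) := by simp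
        have hmem_d : d ∈ ({b, c, d} : Finset ℕ) := by simp
        have ha : a ∉ ({b, c, d} : Finset ℕ) := by simp [hab, hac, had]
        rw [lone a {b, c, d} ha G hG
          (fun v => R (v ⟨b, hmem_b⟩) * (G (v ⟨c, hmem_c⟩) * R (v ⟨d, hmem_d⟩)))
          ((hR.comp (measurable_pi_apply _)).mul
            ((hG.comp (measurable_pi_apply _)).mul (hR.comp (measurable_pi_apply _)))),
          hGz a, zero_mul]
  -- square-integrability transfers
  have hGsq0 : Integrable (fun ω => (G (W 0 ω))^2) μ :=
    (memLp_two_iff_integrable_sq ((hG.comp (hW 0)).aestronglyMeasurable)).1 hG2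
  have hRsq0 : Integrable (fun ω => (R (W 0 ω))^2) μ :=
    (memLp_two_iff_integrable_sq ((hR.comp (hW 0)).aestronglyMeasurable)).1 hR2
  have hGsq : ∀ a : ℕ, Integrable (fun ω => (G (W a ω))^2) μ := fun a =>
    (tId a (fun b => (G b)^2) (hG.pow_const 2)).integrable_iff.2 hGsq0
  have hRsq : ∀ a : ℕ, Integrable (fun ω => (R (W a ω))^2) μ := fun a =>
    (tId a (fun b => (R b)^2) (hR.pow_const 2)).integrable_iff.2 hRsq0
  -- MemLp of each summand
  have memZ : ∀ i : Fin n, MemLp (fun ω => G (W (i:ℕ) ω) * R (W (s i : ℕ) ω)) 2 μ := by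
    intro i
    by_cases h : ((s i : ℕ)) = (i : ℕ)
    · rw [h]
      exact (tId (i:ℕ) (fun b => G b * R b) (hG.mul hR)).memLp_iff.2 hGR2
    · refine (memLp_two_iff_integrable_sq ?_).2 ?_
      · exact ((hG.comp (hW _)).mul (hR.comp (hW _))).aestronglyMeasurable
      · have heq : ∀ ω, (G (W (i:ℕ) ω) * R (W (s i : ℕ) ω))^2 =
            (G (W (i:ℕ) ω))^2 * (R (W (s i : ℕ) ω))^2 := fun ω => by ring
        simp_rw [heq]
        have hIF := ((hindep.indepFun (fun hh => h (hh.symm))).comp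
          (hG.pow_const 2) (hR.pow_const 2))
        exact hIF.integrable_mul (hGsq _) (hRsq _)
  -- diagonal bound
  set C1 := ∫ ω, (G (W 0 ω) * R (W 0 ω))^2 ∂μ with hC1
  set C2 := (∫ ω, (G (W 0 ω))^2 ∂μ) * (∫ ω, (R (W 0 ω))^2 ∂μ) with hC2
  have hC1n : 0 ≤ C1 := integral_nonneg fun ω => sq_nonneg _
  have hC2n : 0 ≤ C2 :=
    mul_nonneg (integral_nonneg fun ω => sq_nonneg _) (integral_nonneg fun ω => sq_nonneg _)
  have diag : ∀ i : Fin n,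
      ∫ ω, (G (W (i:ℕ) ω) * R (W (s i : ℕ) ω)) * (G (W (i:ℕ) ω) * R (W (s i : ℕ) ω)) ∂μ
        ≤ C1 + C2 := by
    intro i
    by_cases h : ((s i : ℕ)) = (i : ℕ)
    · rw [h]
      have heq : ∀ ω, (G (W (i:ℕ) ω) * R (W (i:ℕ) ω)) * (G (W (i:ℕ) ω) * R (W (i:ℕ) ω)) =
          (fun b => (G b * R b)^2) (W (i:ℕ) ω) := fun ω => by simp only; ring
      simp_rw [heq]
      rw [intEq (i:ℕ) (fun b => (G b * R b)^2) ((hG.mul hR).pow_const 2)]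
      exact le_add_of_le_of_nonneg le_rfl hC2n
    · have heq : ∀ ω, (G (W (i:ℕ) ω) * R (W (s i : ℕ) ω)) * (G (W (i:ℕ) ω) * R (W (s i : ℕ) ω)) =
          (fun b => (G b)^2) (W (i:ℕ) ω) * (fun b => (R b)^2) (W (s i : ℕ) ω) := fun ω => by
        simp only; ring
      simp_rw [heq]
      rw [two (i:ℕ) ((s i : ℕ)) (fun b => (G b)^2) (fun b => (R b)^2)
        (fun hh => h (hh.symm)) (hG.pow_const 2) (hR.pow_const 2),
        intEq (i:ℕ) (fun b => (G b)^2) (hG.pow_const 2),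
        intEq ((s i : ℕ)) (fun b => (R b)^2) (hR.pow_const 2)]
      exact le_add_of_nonneg_of_le hC1n le_rfl
  have orth : ∀ i i' : Fin n, i ≠ i' →
      ∫ ω, (G (W (i:ℕ) ω) * R (W (s i : ℕ) ω)) * (G (W (i':ℕ) ω) * R (W (s i' : ℕ) ω)) ∂μ = 0 :=
    fun i i' h => key (i:ℕ) ((s i : ℕ)) (i':ℕ) ((s i' : ℕ))
      (fun hh => h (Fin.val_injective hh))
  refine ⟨memLp_finset_sum univ (fun i _ => memZ i), ?_⟩
  exact cpi_sum_sq_le memZ orth diag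

end Core

lemma cpi_subtype_sum {p : ℕ} (j : Fin p) (c : Fin p → ℝ) (hc : c j = 0) (v : Fin p → ℝ) :
    ∑ k : {k : Fin p // k ≠ j}, v (k : Fin p) * c (k : Fin p) = ∑ k, v k * c k := by
  rw [← Finset.sum_subtype (Finset.univ.erase j)
    (fun x => by simp [Finset.mem_erase]) (fun k => v k * c k)]
  exact Finset.sum_erase _ (by rw [hc, mul_zero])

lemma cpi_alg {p : ℕ} (j : Fin p) (w wh u : Fin p → ℝ) (X X' : Fin p → ℝ) (e : ℝ) :
    (((∑ k, X k * w k) + e)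
        - (∑ k, (if k = j then (∑ l, X l * u l) + (X' j - ∑ l, X' l * u l) else X k) * wh k)) ^ 2
      - (((∑ k, X k * w k) + e) - (∑ k, X k * wh k)) ^ 2
    = 2 * wh j * ((((∑ k, X k * w k) + e) - (∑ k, X k * wh k)) + wh j * (X j - ∑ l, X l * u l))
        * ((X j - ∑ l, X l * u l) - (X' j - ∑ l, X' l * u l))
      + wh j ^ 2 * ((X' j - ∑ l, X' l * u l) ^ 2 - (X j - ∑ l, X l * u l) ^ 2) := by
  have key : ∀ E : ℝ, (∑ k, (if k = j then E else X k) * wh k)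
      = (∑ k, X k * wh k) + (E - X j) * wh j := by
    intro E
    have h : ∀ k : Fin p, (if k = j then E else X k) * wh k
        = X k * wh k + (if k = j then (E - X j) * wh j else 0) := by
      intro k; by_cases hk : k = j
      · subst hk; simp; ring
      · simp [hk]
    rw [Finset.sum_congr rfl fun k _ => h k, Finset.sum_add_distrib,
      Finset.sum_ite_eq' Finset.univ j _, if_pos (Finset.mem_univ j)]
  rw [key]; ring

section Aux
variable {Ω : Type*} [MeasurableSpace Ω] {μ : Measure Ω} [IsProbabilityMeasure μ]

lemma cpi_integrable_mul_L2' {f g : Ω → ℝ} (hf : MemLp f 2 μ) (hg : MemLp g 2 μ) :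
    Integrable (fun ω => f ω * g ω) μ := by
  have h : MemLp (f • g) 1 μ :=
    hg.smul hf
  exact memLp_one_iff_integrable.1 h

lemma cpi_memLp_mul_L4' {f g : Ω → ℝ} (hf : MemLp f 4 μ) (hg : MemLp g 4 μ) :
    MemLp (fun ω => f ω * g ω) 2 μ := by
  have h4 : (2:ℝ≥0∞)⁻¹ = 4⁻¹ + 4⁻¹ := by
    rw [← two_mul, show (4:ℝ≥0∞) = 2*2 by norm_num, ENNReal.mul_inv (by norm_num) (by norm_num),
      ← mul_assoc, ENNReal.mul_inv_cancel (by norm_num) (by norm_num), one_mul]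
  have h : MemLp (f • g) 2 μ := hg.smul hf (hpqr := ⟨h4.symm⟩)
  exact h

lemma cpi_subtype_sum' {p : ℕ} (j : Fin p) (c : Fin p → ℝ) (hc : c j = 0) (v : Fin p → ℝ) :
    ∑ k : {k : Fin p // k ≠ j}, v (k : Fin p) * c (k : Fin p) = ∑ k, v k * c k := by
  rw [← Finset.sum_subtype (Finset.univ.erase j)
    (fun x => by simp [Finset.mem_erase]) (fun k => v k * c k)]
  exact Finset.sum_erase _ (by rw [hc, mul_zero])

end Aux

lemma cpi_cond_zero {Ω : Type*} {mΩ : MeasurableSpace Ω} {μ : Measure Ω} [IsProbabilityMeasure μ]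
    {m : MeasurableSpace Ω} (hm : m ≤ mΩ)
    {f g φ : Ω → ℝ}
    (hfSM : StronglyMeasurable[m] f)
    (hφSM : StronglyMeasurable[m] φ)
    (hg : Integrable g μ) (hφ : Integrable φ μ)
    (hfR : Integrable (fun ω => f ω * (g ω - φ ω)) μ)
    (hcond : μ[g | m] =ᵐ[μ] φ) :
    ∫ ω, f ω * (g ω - φ ω) ∂μ = 0 := by
  haveI : IsFiniteMeasure (μ.trim hm) := isFiniteMeasure_trim hm
  have hR : Integrable (fun ω => g ω - φ ω) μ := hg.sub hφ
  have hcondR : μ[(fun ω => g ω - φ ω) | m] =ᵐ[μ] 0 := by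
    have h1 : μ[(fun ω => g ω - φ ω) | m] =ᵐ[μ] μ[g|m] - μ[φ|m] := condExp_sub hg hφ m
    have h2 : μ[φ|m] = φ := condExp_of_stronglyMeasurable hm hφSM hφ
    filter_upwards [h1, hcond] with ω e1 e2
    rw [Pi.zero_apply, e1, Pi.sub_apply, h2, e2, sub_self]
  have hpull := condExp_mul_of_stronglyMeasurable_left hfSM (by exact hfR) hR
  have hzero : μ[f * (fun ω => g ω - φ ω) | m] =ᵐ[μ] 0 := by
    filter_upwards [hpull, hcondR] with ω e1 e2
    rw [Pi.zero_apply, e1, Pi.mul_apply, e2, Pi.zero_apply, mul_zero]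
  have h3 : ∫ ω, (f * (fun ω => g ω - φ ω)) ω ∂μ = 0 := by
    rw [← integral_condExp hm (f := f * (fun ω => g ω - φ ω)),
      integral_congr_ae hzero]
    simp
  simpa using h3

section Moments
variable {Ω : Type*} [MeasurableSpace Ω] {μ : Measure Ω} [IsProbabilityMeasure μ]

lemma cpi_moments {p : ℕ} (j : Fin p)
    (x : ℕ → Ω → (Fin p → ℝ)) (ε : ℕ → Ω → ℝ)
    (w wh u : Fin p → ℝ) (hwj : w j = 0) (huj : u j = 0)
    (hmeas0 : Measurable (fun ω => (x 0 ω, ε 0 ω)))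
    (hxmean : ∀ k, μ[fun ω => x 0 ω k] = 0)
    (hx4 : ∀ k, MemLp (fun ω => x 0 ω k) 4 μ)
    (hεmean : μ[ε 0] = 0) (hε2 : MemLp (ε 0) 2 μ)
    (hxε : IndepFun (x 0) (ε 0) μ)
    (hcond : μ[(fun ω => x 0 ω j) |
        MeasurableSpace.comap
          (fun ω => (fun k : {k : Fin p // k ≠ j} => x 0 ω (k : Fin p)))
          inferInstance]
      =ᵐ[μ] fun ω => ∑ k, x 0 ω k * u k)
    (G R : (Fin p → ℝ) × ℝ → ℝ)
    (hGdef : G = fun b => (((∑ k, b.1 k * w k) + b.2) - ∑ k, b.1 k * wh k)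
      + wh j * (b.1 j - ∑ l, b.1 l * u l))
    (hRdef : R = fun b => b.1 j - ∑ l, b.1 l * u l) :
    (∫ ω, G (x 0 ω, ε 0 ω) ∂μ = 0) ∧
    (∫ ω, G (x 0 ω, ε 0 ω) * R (x 0 ω, ε 0 ω) ∂μ = 0) ∧
    MemLp (fun ω => G (x 0 ω, ε 0 ω) * R (x 0 ω, ε 0 ω)) 2 μ ∧
    MemLp (fun ω => G (x 0 ω, ε 0 ω)) 2 μ ∧
    MemLp (fun ω => R (x 0 ω, ε 0 ω)) 2 μ := by
  subst hGdef hRdef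
  have hxm : Measurable (x 0) := measurable_fst.comp hmeas0
  have hεm : Measurable (ε 0) := measurable_snd.comp hmeas0
  have hxkm : ∀ k, Measurable (fun ω => x 0 ω k) := fun k => (measurable_pi_apply k).comp hxm
  -- linear combinations
  have hlin4 : ∀ c : Fin p → ℝ, MemLp (fun ω => ∑ k, x 0 ω k * c k) 4 μ := by
    intro c
    refine memLp_finset_sum univ (fun k _ => ?_)
    rw [show (fun ω => x 0 ω k * c k) = fun ω => c k * x 0 ω k from funext fun ω => mul_comm _ _]
    exact (hx4 k).const_mul (c k)
  have hlin2 : ∀ c : Fin p → ℝ, MemLp (fun ω => ∑ k, x 0 ω k * c k) 2 μ := fun c =>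
    (hlin4 c).mono_exponent (by norm_num)
  have hlin_int : ∀ c : Fin p → ℝ, Integrable (fun ω => ∑ k, x 0 ω k * c k) μ := fun c =>
    (hlin2 c).integrable one_le_two
  have hxk_int : ∀ k, Integrable (fun ω => x 0 ω k) μ := fun k =>
    ((hx4 k).mono_exponent (by norm_num : (1:ℝ≥0∞) ≤ 4)).integrable le_rfl
  have hlin_mean : ∀ c : Fin p → ℝ, ∫ ω, ∑ k, x 0 ω k * c k ∂μ = 0 := by
    intro c
    rw [integral_finset_sum _ (fun k _ => (hxk_int k).mul_const (c k))]
    refine Finset.sum_eq_zero fun k _ => ?_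
    rw [integral_mul_const, hxmean k, zero_mul]
  -- the residual R₀
  set R0 : Ω → ℝ := fun ω => x 0 ω j - ∑ l, x 0 ω l * u l with hR0def
  have hR0mem4 : MemLp R0 4 μ := (hx4 j).sub (hlin4 u)
  have hR0mem2 : MemLp R0 2 μ := hR0mem4.mono_exponent (by norm_num)
  have hR0int : Integrable R0 μ := hR0mem2.integrable one_le_two
  -- the regression part hfun
  set d : Fin p → ℝ := fun k => (w k - wh k) + wh j * ((if k = j then 1 else 0) - u k) with hd
  have hdj : d j = 0 := by simp [hd, hwj, huj]
  set hfun : Ω → ℝ := fun ω => ∑ k, x 0 ω k * d k with hhfun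
  have hfun_eq : ∀ ω, ((((∑ k, x 0 ω k * w k) + ε 0 ω) - ∑ k, x 0 ω k * wh k)
      + wh j * (x 0 ω j - ∑ l, x 0 ω l * u l)) = hfun ω + ε 0 ω := by
    intro ω
    have h1 : ∀ k, x 0 ω k * d k
        = (x 0 ω k * w k - x 0 ω k * wh k)
          + wh j * ((if k = j then x 0 ω k else 0) - x 0 ω k * u k) := by
      intro k; by_cases hk : k = j
      · subst hk; simp [hd]; ring
      · simp [hd, hk]; ring
    have h2 : hfun ω = ((∑ k, x 0 ω k * w k) - ∑ k, x 0 ω k * wh k)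
        + wh j * (x 0 ω j - ∑ k, x 0 ω k * u k) := by
      rw [hhfun]
      simp only
      rw [Finset.sum_congr rfl fun k _ => h1 k, Finset.sum_add_distrib,
        ← Finset.mul_sum, Finset.sum_sub_distrib, Finset.sum_sub_distrib,
        Finset.sum_ite_eq' Finset.univ j _, if_pos (Finset.mem_univ j)]
    rw [h2]; ring
  have hfunmem4 : MemLp hfun 4 μ := hlin4 d
  have hfunmem2 : MemLp hfun 2 μ := hfunmem4.mono_exponent (by norm_num)
  have hprod_int : Integrable (fun ω => hfun ω * R0 ω) μ :=
    cpi_integrable_mul_L2' hfunmem2 hR0mem2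
  -- strong measurability w.r.t. the comap σ-algebra
  have hq : Measurable (fun ω => (fun k : {k : Fin p // k ≠ j} => x 0 ω (k : Fin p))) :=
    measurable_pi_lambda _ fun k => hxkm (k : Fin p)
  have hqm : Measurable[MeasurableSpace.comap
      (fun ω => (fun k : {k : Fin p // k ≠ j} => x 0 ω (k : Fin p))) inferInstance]
      (fun ω => (fun k : {k : Fin p // k ≠ j} => x 0 ω (k : Fin p))) :=
    comap_measurable _
  have hSMgen : ∀ c : Fin p → ℝ, c j = 0 →
      StronglyMeasurable[MeasurableSpace.comap
        (fun ω => (fun k : {k : Fin p // k ≠ j} => x 0 ω (k : Fin p))) inferInstance]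
        (fun ω => ∑ k, x 0 ω k * c k) := by
    intro c hc
    have heq : (fun ω => ∑ k, x 0 ω k * c k) = (fun f : {k : Fin p // k ≠ j} → ℝ =>
        ∑ k : {k : Fin p // k ≠ j}, f k * c (k : Fin p)) ∘
        (fun ω => (fun k : {k : Fin p // k ≠ j} => x 0 ω (k : Fin p))) := by
      funext ω
      exact (cpi_subtype_sum' j c hc (x 0 ω)).symm
    rw [heq]
    exact ((Finset.measurable_sum univ fun k _ =>
      (measurable_pi_apply k).mul_const _).comp hqm).stronglyMeasurable
  -- ∫ hfun * R0 = 0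
  have hintHR : ∫ ω, hfun ω * R0 ω ∂μ = 0 :=
    cpi_cond_zero hq.comap_le (hSMgen d hdj) (hSMgen u huj)
      (hxk_int j) (hlin_int u) hprod_int hcond
  -- ε-related facts
  have hεR_indep : IndepFun (ε 0) R0 μ := by
    have h := hxε.symm.comp (φ := (id : ℝ → ℝ))
      (ψ := fun v : Fin p → ℝ => v j - ∑ l, v l * u l) measurable_id
      ((measurable_pi_apply (X := fun _ : Fin p => ℝ) j).sub (Finset.measurable_sum univ fun l _ =>
        (measurable_pi_apply (X := fun _ : Fin p => ℝ) l).mul_const (u l)))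
    exact h
  have hε_int : Integrable (ε 0) μ := hε2.integrable one_le_two
  have hεR_int : Integrable (fun ω => ε 0 ω * R0 ω) μ :=
    hεR_indep.integrable_mul hε_int hR0int
  have hintεR : ∫ ω, ε 0 ω * R0 ω ∂μ = 0 := by
    have h2 : ∫ ω, ε 0 ω * R0 ω ∂μ = (∫ ω, ε 0 ω ∂μ) * ∫ ω, R0 ω ∂μ :=
      hεR_indep.integral_fun_mul_eq_mul_integral hε2.aestronglyMeasurable hR0mem2.aestronglyMeasurable
    rw [h2, hεmean, zero_mul]
  have hε_sq_int : Integrable (fun ω => (ε 0 ω)^2) μ :=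
    (memLp_two_iff_integrable_sq hε2.aestronglyMeasurable).1 hε2
  have hR0_sq_int : Integrable (fun ω => (R0 ω)^2) μ :=
    (memLp_two_iff_integrable_sq hR0mem2.aestronglyMeasurable).1 hR0mem2
  have hεR_mem2 : MemLp (fun ω => ε 0 ω * R0 ω) 2 μ := by
    refine (memLp_two_iff_integrable_sq
      (hε2.aestronglyMeasurable.mul hR0mem2.aestronglyMeasurable)).2 ?_
    have hind2 : IndepFun (fun ω => (ε 0 ω)^2) (fun ω => (R0 ω)^2) μ := by
      have h := hxε.symm.comp (φ := fun r : ℝ => r^2)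
        (ψ := fun v : Fin p → ℝ => (v j - ∑ l, v l * u l)^2) (measurable_id.pow_const 2)
        (((measurable_pi_apply (X := fun _ : Fin p => ℝ) j).sub (Finset.measurable_sum univ fun l _ =>
          (measurable_pi_apply (X := fun _ : Fin p => ℝ) l).mul_const (u l))).pow_const 2)
      exact h
    exact (hind2.integrable_mul hε_sq_int hR0_sq_int).congr
      (Filter.Eventually.of_forall fun ω => by simp only [Pi.mul_apply]; ring)
  -- assemble
  have hGfun : (fun ω => ((((∑ k, x 0 ω k * w k) + ε 0 ω) - ∑ k, x 0 ω k * wh k)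
      + wh j * (x 0 ω j - ∑ l, x 0 ω l * u l))) = fun ω => hfun ω + ε 0 ω := funext hfun_eq
  refine ⟨?_, ?_, ?_, ?_, hR0mem2⟩
  · show ∫ ω, ((((∑ k, x 0 ω k * w k) + ε 0 ω) - ∑ k, x 0 ω k * wh k)
      + wh j * (x 0 ω j - ∑ l, x 0 ω l * u l)) ∂μ = 0
    rw [hGfun, integral_add (hlin_int d) hε_int, hlin_mean d, hεmean, add_zero]
  · show ∫ ω, ((((∑ k, x 0 ω k * w k) + ε 0 ω) - ∑ k, x 0 ω k * wh k)
      + wh j * (x 0 ω j - ∑ l, x 0 ω l * u l)) * R0 ω ∂μ = 0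
    have heq : (fun ω => ((((∑ k, x 0 ω k * w k) + ε 0 ω) - ∑ k, x 0 ω k * wh k)
        + wh j * (x 0 ω j - ∑ l, x 0 ω l * u l)) * R0 ω)
        = fun ω => hfun ω * R0 ω + ε 0 ω * R0 ω := by
      funext ω
      rw [hfun_eq ω]; ring
    rw [heq, integral_add hprod_int hεR_int, hintHR, hintεR, add_zero]
  · show MemLp (fun ω => ((((∑ k, x 0 ω k * w k) + ε 0 ω) - ∑ k, x 0 ω k * wh k)
      + wh j * (x 0 ω j - ∑ l, x 0 ω l * u l)) * R0 ω) 2 μ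
    have heq : (fun ω => ((((∑ k, x 0 ω k * w k) + ε 0 ω) - ∑ k, x 0 ω k * wh k)
        + wh j * (x 0 ω j - ∑ l, x 0 ω l * u l)) * R0 ω)
        = fun ω => hfun ω * R0 ω + ε 0 ω * R0 ω := by
      funext ω
      rw [hfun_eq ω]; ring
    rw [heq]
    exact (cpi_memLp_mul_L4' hfunmem4 hR0mem4).add hεR_mem2
  · show MemLp (fun ω => ((((∑ k, x 0 ω k * w k) + ε 0 ω) - ∑ k, x 0 ω k * wh k)
      + wh j * (x 0 ω j - ∑ l, x 0 ω l * u l))) 2 μ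
    rw [hGfun]
    exact hfunmem2.add hε2

end Moments

theorem cpi_estimator_tendsto_zero
    {Ω : Type*} [MeasurableSpace Ω] (μ : Measure Ω) [IsProbabilityMeasure μ]
    (p : ℕ) (j : Fin p)
    (x : ℕ → Ω → (Fin p → ℝ)) (ε : ℕ → Ω → ℝ)
    (w wh u : Fin p → ℝ) (hwj : w j = 0) (huj : u j = 0)
    (hmeas : ∀ i, Measurable (fun ω => (x i ω, ε i ω)))
    (hindep : iIndepFun (fun i ω => (x i ω, ε i ω)) μ)
    (hident : ∀ i, IdentDistrib (fun ω => (x i ω, ε i ω)) (fun ω => (x 0 ω, ε 0 ω)) μ μ)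
    (hxmean : ∀ k, μ[fun ω => x 0 ω k] = 0)
    (hx4 : ∀ k, MemLp (fun ω => x 0 ω k) 4 μ)
    (hεmean : μ[ε 0] = 0) (hε2 : MemLp (ε 0) 2 μ)
    (hxε : IndepFun (x 0) (ε 0) μ)
    (hcond : μ[(fun ω => x 0 ω j) |
        MeasurableSpace.comap
          (fun ω => (fun k : {k : Fin p // k ≠ j} => x 0 ω (k : Fin p)))
          inferInstance]
      =ᵐ[μ] fun ω => ∑ k, x 0 ω k * u k)
    (π : (n : ℕ) → Ω → Equiv.Perm (Fin n))
    (hπunif : ∀ n (s : Equiv.Perm (Fin n)),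
      μ {ω | π n ω = s} = 1 / (n.factorial : ENNReal))
    (hπindep : ∀ n, @IndepFun Ω (Equiv.Perm (Fin n)) (Fin n → (Fin p → ℝ) × ℝ)
      _ ⊤ _ (π n) (fun ω (i : Fin n) => (x i ω, ε i ω)) μ) :
    TendstoInMeasure μ
      (fun (n : ℕ) ω =>
        (1 / (n : ℝ)) * ∑ i : Fin n,
          ((((∑ k, x (i : ℕ) ω k * w k) + ε (i : ℕ) ω)
              - (∑ k, (if k = j then
                    (∑ l, x (i : ℕ) ω l * u l)
                      + (x ((π n ω i : Fin n) : ℕ) ω j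
                          - ∑ l, x ((π n ω i : Fin n) : ℕ) ω l * u l)
                  else x (i : ℕ) ω k) * wh k)) ^ 2
            - (((∑ k, x (i : ℕ) ω k * w k) + ε (i : ℕ) ω)
                - (∑ k, x (i : ℕ) ω k * wh k)) ^ 2))
      atTop (fun _ => 0) := by
  rw [tendstoInMeasure_iff_dist]
  intro δ hδ
  by_cases hwh0 : wh j = 0
  · -- trivial case: the estimator is identically zero
    have hz : ∀ (n : ℕ) (ω : Ω),
        (1 / (n : ℝ)) * ∑ i : Fin n,
          ((((∑ k, x (i : ℕ) ω k * w k) + ε (i : ℕ) ω)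
              - (∑ k, (if k = j then
                    (∑ l, x (i : ℕ) ω l * u l)
                      + (x ((π n ω i : Fin n) : ℕ) ω j
                          - ∑ l, x ((π n ω i : Fin n) : ℕ) ω l * u l)
                  else x (i : ℕ) ω k) * wh k)) ^ 2
            - (((∑ k, x (i : ℕ) ω k * w k) + ε (i : ℕ) ω)
                - (∑ k, x (i : ℕ) ω k * wh k)) ^ 2) = 0 := by
      intro n ω
      rw [Finset.sum_eq_zero, mul_zero]
      intro i _
      have hsum : (∑ k, (if k = j then
            (∑ l, x (i : ℕ) ω l * u l)
              + (x ((π n ω i : Fin n) : ℕ) ω j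
                  - ∑ l, x ((π n ω i : Fin n) : ℕ) ω l * u l)
          else x (i : ℕ) ω k) * wh k) = ∑ k, x (i : ℕ) ω k * wh k := by
        refine Finset.sum_congr rfl fun k _ => ?_
        by_cases hk : k = j
        · subst hk; rw [if_pos rfl, hwh0, mul_zero, mul_zero]
        · rw [if_neg hk]
      rw [hsum, sub_self]
    have hset : ∀ n : ℕ, {ω : Ω | δ ≤ dist ((1 / (n : ℝ)) * ∑ i : Fin n,
          ((((∑ k, x (i : ℕ) ω k * w k) + ε (i : ℕ) ω)
              - (∑ k, (if k = j then
                    (∑ l, x (i : ℕ) ω l * u l)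
                      + (x ((π n ω i : Fin n) : ℕ) ω j
                          - ∑ l, x ((π n ω i : Fin n) : ℕ) ω l * u l)
                  else x (i : ℕ) ω k) * wh k)) ^ 2
            - (((∑ k, x (i : ℕ) ω k * w k) + ε (i : ℕ) ω)
                - (∑ k, x (i : ℕ) ω k * wh k)) ^ 2)) 0} = ∅ := by
      intro n
      refine Set.eq_empty_iff_forall_notMem.2 fun ω hω => ?_
      rw [Set.mem_setOf_eq, hz n ω, dist_self] at hω
      exact absurd hω (not_le.2 hδ)
    have : ∀ n : ℕ, μ {ω : Ω | δ ≤ dist ((1 / (n : ℝ)) * ∑ i : Fin n,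
          ((((∑ k, x (i : ℕ) ω k * w k) + ε (i : ℕ) ω)
              - (∑ k, (if k = j then
                    (∑ l, x (i : ℕ) ω l * u l)
                      + (x ((π n ω i : Fin n) : ℕ) ω j
                          - ∑ l, x ((π n ω i : Fin n) : ℕ) ω l * u l)
                  else x (i : ℕ) ω k) * wh k)) ^ 2
            - (((∑ k, x (i : ℕ) ω k * w k) + ε (i : ℕ) ω)
                - (∑ k, x (i : ℕ) ω k * wh k)) ^ 2)) 0} = 0 := by
      intro n; rw [hset n, measure_empty]
    simpa only [this] using (tendsto_const_nhds :
      Tendsto (fun _ : ℕ => (0 : ℝ≥0∞)) atTop (𝓝 0))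
  · -- main case: wh j ≠ 0
    have hwj' : 0 < |wh j| := abs_pos.2 hwh0
    set G : (Fin p → ℝ) × ℝ → ℝ := fun b => (((∑ k, b.1 k * w k) + b.2) - ∑ k, b.1 k * wh k)
      + wh j * (b.1 j - ∑ l, b.1 l * u l) with hGdef
    set R : (Fin p → ℝ) × ℝ → ℝ := fun b => b.1 j - ∑ l, b.1 l * u l with hRdef
    obtain ⟨hG0, hGR0, hGR2, hG2, hR2⟩ := cpi_moments j x ε w wh u hwj huj (hmeas 0)
      hxmean hx4 hεmean hε2 hxε hcond G R hGdef hRdef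
    have hGm : Measurable G := by
      rw [hGdef]
      exact (((Finset.measurable_sum univ fun k _ =>
          ((measurable_pi_apply (X := fun _ : Fin p => ℝ) k).comp measurable_fst).mul_const (w k)).add
          measurable_snd).sub (Finset.measurable_sum univ fun k _ =>
          ((measurable_pi_apply (X := fun _ : Fin p => ℝ) k).comp measurable_fst).mul_const (wh k))).add
        ((((measurable_pi_apply (X := fun _ : Fin p => ℝ) j).comp measurable_fst).sub
          (Finset.measurable_sum univ fun l _ =>
          ((measurable_pi_apply (X := fun _ : Fin p => ℝ) l).comp measurable_fst).mul_const (u l))).const_mul (wh j))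
    have hRm : Measurable R := by
      rw [hRdef]
      exact ((measurable_pi_apply (X := fun _ : Fin p => ℝ) j).comp measurable_fst).sub
        (Finset.measurable_sum univ fun l _ =>
          ((measurable_pi_apply (X := fun _ : Fin p => ℝ) l).comp measurable_fst).mul_const (u l))
    have hcoreApp : ∀ (n : ℕ) (sf : Fin n → Fin n),
        MemLp (fun ω => ∑ i : Fin n, G (x (i:ℕ) ω, ε (i:ℕ) ω)
          * R (x ((sf i : Fin n) : ℕ) ω, ε ((sf i : Fin n) : ℕ) ω)) 2 μ ∧
        ∫ ω, (∑ i : Fin n, G (x (i:ℕ) ω, ε (i:ℕ) ω)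
            * R (x ((sf i : Fin n) : ℕ) ω, ε ((sf i : Fin n) : ℕ) ω))^2 ∂μ ≤
          n * ((∫ ω, (G (x 0 ω, ε 0 ω) * R (x 0 ω, ε 0 ω))^2 ∂μ) +
            (∫ ω, (G (x 0 ω, ε 0 ω))^2 ∂μ) * (∫ ω, (R (x 0 ω, ε 0 ω))^2 ∂μ)) :=
      fun n sf =>
        cpi_core (W := fun i ω => (x i ω, ε i ω)) (fun i => hmeas i) hindep hident hGm hRm
          hG0 hGR0 hGR2 hG2 hR2 n sf
    set C : ℝ := (∫ ω, (G (x 0 ω, ε 0 ω) * R (x 0 ω, ε 0 ω))^2 ∂μ)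
      + (∫ ω, (G (x 0 ω, ε 0 ω))^2 ∂μ) * (∫ ω, (R (x 0 ω, ε 0 ω))^2 ∂μ) with hCdef
    set K : ℝ := 16 * wh j^2 * C / δ^2 with hKdef
    have hbound : ∀ n : ℕ, 1 ≤ n →
        μ {ω : Ω | δ ≤ dist ((1 / (n : ℝ)) * ∑ i : Fin n,
          ((((∑ k, x (i : ℕ) ω k * w k) + ε (i : ℕ) ω)
              - (∑ k, (if k = j then
                    (∑ l, x (i : ℕ) ω l * u l)
                      + (x ((π n ω i : Fin n) : ℕ) ω j
                          - ∑ l, x ((π n ω i : Fin n) : ℕ) ω l * u l)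
                  else x (i : ℕ) ω k) * wh k)) ^ 2
            - (((∑ k, x (i : ℕ) ω k * w k) + ε (i : ℕ) ω)
                - (∑ k, x (i : ℕ) ω k * wh k)) ^ 2)) 0}
          ≤ ENNReal.ofReal (K / n) := by
      intro n hn
      have hn' : (0:ℝ) < n := by exact_mod_cast hn
      set T : (Fin n → Fin n) → Ω → ℝ := fun sf ω => ∑ i : Fin n,
        G (x (i:ℕ) ω, ε (i:ℕ) ω) * R (x ((sf i : Fin n) : ℕ) ω, ε ((sf i : Fin n) : ℕ) ω)
        with hTdef
      set D : Equiv.Perm (Fin n) → Ω → ℝ := fun s ω => T (fun i => i) ω - T (fun i => s i) ω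
        with hDdef
      have hmemT : ∀ sf, MemLp (T sf) 2 μ := fun sf => (hcoreApp n sf).1
      have hintT : ∀ sf, ∫ ω, (T sf ω)^2 ∂μ ≤ n * C := fun sf => (hcoreApp n sf).2
      have hmemD : ∀ s, MemLp (D s) 2 μ := fun s => ((hmemT _).sub (hmemT _))
      have hsqintT : ∀ sf, Integrable (fun ω => (T sf ω)^2) μ := fun sf =>
        (memLp_two_iff_integrable_sq (hmemT sf).aestronglyMeasurable).1 (hmemT sf)
      have hsqintD : ∀ s, Integrable (fun ω => (D s ω)^2) μ := fun s =>
        (memLp_two_iff_integrable_sq (hmemD s).aestronglyMeasurable).1 (hmemD s)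
      have hintD : ∀ s, ∫ ω, (D s ω)^2 ∂μ ≤ 4*((n:ℝ)*C) := by
        intro s
        have h1 := hintT (fun i => i)
        have h2 := hintT (fun i => s i)
        have hpt : ∀ ω, (D s ω)^2 ≤ 2*(T (fun i => i) ω)^2 + 2*(T (fun i => s i) ω)^2 := by
          intro ω
          show (T (fun i => i) ω - T (fun i => s i) ω)^2 ≤ _
          nlinarith [sq_nonneg (T (fun i => i) ω + T (fun i => s i) ω)]
        calc ∫ ω, (D s ω)^2 ∂μ
            ≤ ∫ ω, (2*(T (fun i => i) ω)^2 + 2*(T (fun i => s i) ω)^2) ∂μ :=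
              integral_mono (hsqintD s)
                (((hsqintT _).const_mul 2).add ((hsqintT _).const_mul 2)) hpt
          _ = 2*(∫ ω, (T (fun i => i) ω)^2 ∂μ) + 2*(∫ ω, (T (fun i => s i) ω)^2 ∂μ) := by
              rw [integral_add ((hsqintT _).const_mul 2) ((hsqintT _).const_mul 2),
                integral_const_mul, integral_const_mul]
          _ ≤ 4*((n:ℝ)*C) := by linarith
      set δ' : ℝ := δ * n / (2 * |wh j|) with hδ'def
      have hδ'pos : 0 < δ' := div_pos (mul_pos hδ hn') (by positivity)
      have hcheb : ∀ s, μ {ω | δ' ≤ |D s ω|} ≤ ENNReal.ofReal ((4*((n:ℝ)*C))/δ'^2) :=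
        fun s => cpi_meas_abs_ge_le (hmemD s) hδ'pos (hintD s)
      -- pointwise identity
      have hid : ∀ ω : Ω, (1 / (n : ℝ)) * ∑ i : Fin n,
          ((((∑ k, x (i : ℕ) ω k * w k) + ε (i : ℕ) ω)
              - (∑ k, (if k = j then
                    (∑ l, x (i : ℕ) ω l * u l)
                      + (x ((π n ω i : Fin n) : ℕ) ω j
                          - ∑ l, x ((π n ω i : Fin n) : ℕ) ω l * u l)
                  else x (i : ℕ) ω k) * wh k)) ^ 2
            - (((∑ k, x (i : ℕ) ω k * w k) + ε (i : ℕ) ω)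
                - (∑ k, x (i : ℕ) ω k * wh k)) ^ 2)
          = 2 * wh j / (n : ℝ) * D (π n ω) ω := by
        intro ω
        have halg : ∀ i : Fin n,
            ((((∑ k, x (i : ℕ) ω k * w k) + ε (i : ℕ) ω)
              - (∑ k, (if k = j then
                    (∑ l, x (i : ℕ) ω l * u l)
                      + (x ((π n ω i : Fin n) : ℕ) ω j
                          - ∑ l, x ((π n ω i : Fin n) : ℕ) ω l * u l)
                  else x (i : ℕ) ω k) * wh k)) ^ 2
            - (((∑ k, x (i : ℕ) ω k * w k) + ε (i : ℕ) ω)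
                - (∑ k, x (i : ℕ) ω k * wh k)) ^ 2)
            = 2 * wh j * G (x (i:ℕ) ω, ε (i:ℕ) ω)
                * (R (x (i:ℕ) ω, ε (i:ℕ) ω)
                    - R (x ((π n ω i : Fin n) : ℕ) ω, ε ((π n ω i : Fin n) : ℕ) ω))
              + wh j^2 * ((R (x ((π n ω i : Fin n) : ℕ) ω, ε ((π n ω i : Fin n) : ℕ) ω))^2
                  - (R (x (i:ℕ) ω, ε (i:ℕ) ω))^2) := by
          intro i
          rw [hGdef, hRdef]
          exact cpi_alg j w wh u (x (i:ℕ) ω) (x ((π n ω i : Fin n) : ℕ) ω) (ε (i:ℕ) ω)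
        rw [Finset.sum_congr rfl fun i _ => halg i, Finset.sum_add_distrib]
        have hperm : ∑ i : Fin n,
            (R (x ((π n ω i : Fin n) : ℕ) ω, ε ((π n ω i : Fin n) : ℕ) ω))^2
            = ∑ i : Fin n, (R (x (i:ℕ) ω, ε (i:ℕ) ω))^2 :=
          Equiv.sum_comp (π n ω) (fun i : Fin n => (R (x (i:ℕ) ω, ε (i:ℕ) ω))^2)
        have h0 : ∑ i : Fin n, wh j^2
            * ((R (x ((π n ω i : Fin n) : ℕ) ω, ε ((π n ω i : Fin n) : ℕ) ω))^2
                - (R (x (i:ℕ) ω, ε (i:ℕ) ω))^2) = 0 := by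
          rw [← Finset.mul_sum, Finset.sum_sub_distrib, hperm, sub_self, mul_zero]
        rw [h0, add_zero]
        have hsplit : ∀ i : Fin n, 2 * wh j * G (x (i:ℕ) ω, ε (i:ℕ) ω)
            * (R (x (i:ℕ) ω, ε (i:ℕ) ω)
                - R (x ((π n ω i : Fin n) : ℕ) ω, ε ((π n ω i : Fin n) : ℕ) ω))
            = 2 * wh j * (G (x (i:ℕ) ω, ε (i:ℕ) ω) * R (x (i:ℕ) ω, ε (i:ℕ) ω)
                - G (x (i:ℕ) ω, ε (i:ℕ) ω)
                  * R (x ((π n ω i : Fin n) : ℕ) ω, ε ((π n ω i : Fin n) : ℕ) ω)) :=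
          fun i => by ring
        rw [Finset.sum_congr rfl fun i _ => hsplit i, ← Finset.mul_sum,
          Finset.sum_sub_distrib]
        have hDval : D (π n ω) ω = (∑ i : Fin n, G (x (i:ℕ) ω, ε (i:ℕ) ω)
              * R (x (i:ℕ) ω, ε (i:ℕ) ω))
            - ∑ i : Fin n, G (x (i:ℕ) ω, ε (i:ℕ) ω)
              * R (x ((π n ω i : Fin n) : ℕ) ω, ε ((π n ω i : Fin n) : ℕ) ω) := rfl
        rw [hDval]; ring
      -- inclusion into the union over permutations
      have hsub : {ω : Ω | δ ≤ dist ((1 / (n : ℝ)) * ∑ i : Fin n,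
          ((((∑ k, x (i : ℕ) ω k * w k) + ε (i : ℕ) ω)
              - (∑ k, (if k = j then
                    (∑ l, x (i : ℕ) ω l * u l)
                      + (x ((π n ω i : Fin n) : ℕ) ω j
                          - ∑ l, x ((π n ω i : Fin n) : ℕ) ω l * u l)
                  else x (i : ℕ) ω k) * wh k)) ^ 2
            - (((∑ k, x (i : ℕ) ω k * w k) + ε (i : ℕ) ω)
                - (∑ k, x (i : ℕ) ω k * wh k)) ^ 2)) 0}
          ⊆ ⋃ s : Equiv.Perm (Fin n), ((π n) ⁻¹' {s} ∩ {ω | δ' ≤ |D s ω|}) := by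
        intro ω hω
        rw [Set.mem_setOf_eq, Real.dist_eq, sub_zero, hid ω] at hω
        refine Set.mem_iUnion.2 ⟨π n ω, rfl, ?_⟩
        rw [Set.mem_setOf_eq, hδ'def]
        have habs : |2 * wh j / (n:ℝ) * D (π n ω) ω|
            = 2 * |wh j| / (n:ℝ) * |D (π n ω) ω| := by
          rw [abs_mul, abs_div, abs_mul, abs_two, Nat.abs_cast]
        rw [habs] at hω
        rw [div_le_iff₀ (by positivity)]
        have h2 := mul_le_mul_of_nonneg_right hω hn'.le
        have heq : 2 * |wh j| / (n:ℝ) * |D (π n ω) ω| * n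
            = |D (π n ω) ω| * (2 * |wh j|) := by
          field_simp
        rw [heq] at h2
        linarith
      -- per-permutation bound
      have hper : ∀ s : Equiv.Perm (Fin n), μ ((π n) ⁻¹' {s} ∩ {ω | δ' ≤ |D s ω|})
          ≤ (1 / (n.factorial : ℝ≥0∞)) * ENNReal.ofReal ((4*((n:ℝ)*C))/δ'^2) := by
        intro s
        have hBmeas : MeasurableSet {v : Fin n → (Fin p → ℝ) × ℝ |
            δ' ≤ |(∑ i : Fin n, G (v i) * R (v i))
              - ∑ i : Fin n, G (v i) * R (v (s i))|} := by
          have hg : Measurable (fun v : Fin n → (Fin p → ℝ) × ℝ =>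
              |(∑ i : Fin n, G (v i) * R (v i)) - ∑ i : Fin n, G (v i) * R (v (s i))|) :=
            (continuous_abs.measurable).comp
              ((Finset.measurable_sum univ fun i _ =>
                  (hGm.comp (measurable_pi_apply i)).mul (hRm.comp (measurable_pi_apply i))).sub
                (Finset.measurable_sum univ fun i _ =>
                  (hGm.comp (measurable_pi_apply i)).mul
                    (hRm.comp (measurable_pi_apply (s i)))))
          exact measurableSet_le measurable_const hg
        have hAeq : {ω | δ' ≤ |D s ω|} = (fun ω (i : Fin n) => (x (i:ℕ) ω, ε (i:ℕ) ω)) ⁻¹'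
            {v : Fin n → (Fin p → ℝ) × ℝ |
              δ' ≤ |(∑ i : Fin n, G (v i) * R (v i))
                - ∑ i : Fin n, G (v i) * R (v (s i))|} := rfl
        calc μ ((π n) ⁻¹' {s} ∩ {ω | δ' ≤ |D s ω|})
            = μ ((π n) ⁻¹' {s}) * μ {ω | δ' ≤ |D s ω|} := by
              conv_lhs => rw [hAeq]
              conv_rhs => rw [hAeq]
              exact (hπindep n).measure_inter_preimage_eq_mul {s} _
                (MeasurableSpace.measurableSet_top) hBmeas
          _ ≤ (1 / (n.factorial : ℝ≥0∞)) * ENNReal.ofReal ((4*((n:ℝ)*C))/δ'^2) := by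
              have hPeq : (π n) ⁻¹' {s} = {ω | π n ω = s} := rfl
              rw [hPeq, hπunif n s]
              exact mul_le_mul_right (hcheb s) _
      -- put everything together
      calc μ {ω : Ω | δ ≤ dist ((1 / (n : ℝ)) * ∑ i : Fin n,
          ((((∑ k, x (i : ℕ) ω k * w k) + ε (i : ℕ) ω)
              - (∑ k, (if k = j then
                    (∑ l, x (i : ℕ) ω l * u l)
                      + (x ((π n ω i : Fin n) : ℕ) ω j
                          - ∑ l, x ((π n ω i : Fin n) : ℕ) ω l * u l)
                  else x (i : ℕ) ω k) * wh k)) ^ 2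
            - (((∑ k, x (i : ℕ) ω k * w k) + ε (i : ℕ) ω)
                - (∑ k, x (i : ℕ) ω k * wh k)) ^ 2)) 0}
          ≤ μ (⋃ s : Equiv.Perm (Fin n), ((π n) ⁻¹' {s} ∩ {ω | δ' ≤ |D s ω|})) :=
            measure_mono hsub
        _ ≤ ∑' s : Equiv.Perm (Fin n), μ ((π n) ⁻¹' {s} ∩ {ω | δ' ≤ |D s ω|}) :=
            measure_iUnion_le _
        _ = ∑ s : Equiv.Perm (Fin n), μ ((π n) ⁻¹' {s} ∩ {ω | δ' ≤ |D s ω|}) :=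
            tsum_fintype _
        _ ≤ ∑ _s : Equiv.Perm (Fin n),
              (1 / (n.factorial : ℝ≥0∞)) * ENNReal.ofReal ((4*((n:ℝ)*C))/δ'^2) :=
            Finset.sum_le_sum fun s _ => hper s
        _ = (n.factorial : ℝ≥0∞)
              * ((1 / (n.factorial : ℝ≥0∞)) * ENNReal.ofReal ((4*((n:ℝ)*C))/δ'^2)) := by
            rw [Finset.sum_const, Finset.card_univ, Fintype.card_perm, Fintype.card_fin,
              nsmul_eq_mul]
        _ = ENNReal.ofReal ((4*((n:ℝ)*C))/δ'^2) := by
            rw [← mul_assoc, one_div, ENNReal.mul_inv_cancel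
              (Nat.cast_ne_zero.2 n.factorial_ne_zero) (ENNReal.natCast_ne_top _), one_mul]
        _ = ENNReal.ofReal (K / n) := by
            congr 1
            rw [hδ'def, hKdef]
            rw [div_pow, mul_pow, mul_pow, sq_abs]
            field_simp
            ring
    refine tendsto_of_tendsto_of_tendsto_of_le_of_le' (g := fun _ : ℕ => (0:ℝ≥0∞))
      (h := fun n : ℕ => ENNReal.ofReal (K / (n:ℝ))) tendsto_const_nhds ?_ ?_ ?_
    · have h := ENNReal.tendsto_ofReal (tendsto_const_div_atTop_nhds_zero_nat K)
      simpa [ENNReal.ofReal_zero] using h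
    · exact Filter.Eventually.of_forall fun n => zero_le
    · exact Filter.eventually_atTop.2 ⟨1, hbound⟩
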